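/- In the binary counter, if the seed emits exactly v carry tokens and the counter runs to quiescence, the final displayed value (sum over j of display_j · 2^j) equals v, assuming v ≤ 2^n − 1 for n digit particles. -/

import Mathlib

/-- A carry step: replace two tokens at position `j` by one token at position `j+1`. -/
def carryStep (t t' : ℕ → ℕ) : Prop :=
  ∃ j, 2 ≤ t j ∧ t' j = t j - 2 ∧ t' (j + 1) = t (j + 1) + 1 ∧
    ∀ k, k ≠ j → k ≠ j + 1 → t' k = t k

lemma sum_ext_zero (t : ℕ → ℕ) (m M : ℕ) (hmM : m ≤ M) (h : ∀ k, m ≤ k → t k = 0) :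
    ∑ j ∈ Finset.range M, t j * 2 ^ j = ∑ j ∈ Finset.range m, t j * 2 ^ j := by
  rw [← Finset.sum_range_add_sum_Ico _ hmM]
  have : ∑ j ∈ Finset.Ico m M, t j * 2 ^ j = 0 := by
    apply Finset.sum_eq_zero
    intro k hk
    rw [h k (Finset.mem_Ico.mp hk).1]; ring
  omega

theorem stmt_13 (n v : ℕ) (hv : v ≤ 2 ^ n - 1) (t : ℕ → ℕ)
    (hreach : Relation.ReflTransGen carryStep (fun j => if j = 0 then v else 0) t)
    (hquies : ∀ j, t j ≤ 1) (hsupp : ∀ j, n ≤ j → t j = 0) :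
    ∑ j ∈ Finset.range n, t j * 2 ^ j = v := by
  have key : ∃ m, (∀ k, m ≤ k → t k = 0) ∧ ∑ j ∈ Finset.range m, t j * 2 ^ j = v := by
    clear hquies hsupp hv
    induction hreach with
    | refl =>
      refine ⟨1, fun k hk => ?_, ?_⟩
      · have : k ≠ 0 := by omega
        simp [this]
      · simp
    | @tail b c hab hbc ih =>
      obtain ⟨m, hm0, hmsum⟩ := ih
      obtain ⟨j, hj2, hcj, hcj1, hother⟩ := hbc
      refine ⟨max m (j + 2), fun k hk => ?_, ?_⟩
      · have hk1 : j + 2 ≤ k := le_trans (le_max_right _ _) hk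
        rw [hother k (by omega) (by omega)]
        exact hm0 k (le_trans (le_max_left _ _) hk)
      · have hbsum : ∑ i ∈ Finset.range (max m (j + 2)), b i * 2 ^ i = v := by
          rw [sum_ext_zero b m _ (le_max_left _ _) hm0]; exact hmsum
        have hmem1 : j ∈ Finset.range (max m (j + 2)) := by
          simp
        have hmem2 : j + 1 ∈ Finset.range (max m (j + 2)) := by
          simp
        have hsplit : ∀ (f : ℕ → ℕ),
            ∑ i ∈ Finset.range (max m (j + 2)), f i * 2 ^ i =
            f j * 2 ^ j + f (j+1) * 2 ^ (j+1) +
            ∑ i ∈ (Finset.range (max m (j + 2))).erase j |>.erase (j+1), f i * 2 ^ i := by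
          intro f
          rw [← Finset.add_sum_erase _ _ hmem1, ← Finset.add_sum_erase _ (fun i => f i * 2 ^ i)
            (Finset.mem_erase.mpr ⟨by omega, hmem2⟩)]
          ring
        rw [hsplit c, hcj, hcj1]
        rw [hsplit b] at hbsum
        have hrest : ∑ i ∈ (Finset.range (max m (j + 2))).erase j |>.erase (j+1), c i * 2 ^ i =
            ∑ i ∈ (Finset.range (max m (j + 2))).erase j |>.erase (j+1), b i * 2 ^ i := by
          apply Finset.sum_congr rfl
          intro k hk
          simp only [Finset.mem_erase] at hk
          rw [hother k hk.2.1 hk.1]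
        rw [hrest]
        have h2 : (2:ℕ) ^ (j+1) = 2 * 2 ^ j := by ring
        rw [h2] at hbsum ⊢
        have e1 : (b j - 2) * 2 ^ j = b j * 2 ^ j - 2 * 2 ^ j := Nat.sub_mul _ _ _
        have e2 : (b (j+1) + 1) * (2 * 2 ^ j) = b (j+1) * (2 * 2 ^ j) + 2 * 2 ^ j := by ring
        have e3 : 2 * 2 ^ j ≤ b j * 2 ^ j := Nat.mul_le_mul_right _ hj2
        omega
  obtain ⟨m, hm0, hmsum⟩ := key
  have h1 := sum_ext_zero t m (max m n) (le_max_left _ _) hm0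
  have h2 := sum_ext_zero t n (max m n) (le_max_right _ _) hsupp
  omega
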